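/- (Corbett) For every n ≥ 2, the reuse sequence C_n is a Hamilton sequence for the rotator graph PR_n. -/

import Mathlib

open Equiv

/-- The prefix-rotation `σ_r = (1 2 ⋯ r)` of positions, 0-indexed as a
permutation of `Fin n` (it sends position `i` to `i+1` for `i < r-1`,
sends position `r-1` to `0`, and fixes all positions `≥ r`). -/
def sigmaRot (n r : ℕ) : Equiv.Perm (Fin n) :=
  if h : r - 1 < n then Fin.cycleRange ⟨r - 1, h⟩ else 1

/-- The permutation `σ_{r₁}σ_{r₂}⋯σ_{r_i}` (composed left-to-right) given by the
first `i` entries of the sequence `S`. -/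
def partialProd (n : ℕ) (S : List ℕ) (i : ℕ) : Equiv.Perm (Fin n) :=
  ((S.take i).map (sigmaRot n)).prod

/-- `S` is a Hamilton sequence for the restricted rotator graph `RR_n(R)`. -/
def IsHamiltonSeq (n : ℕ) (R : Set ℕ) (S : List ℕ) : Prop :=
  S.length = Nat.factorial n ∧
  (∀ r ∈ S, r ∈ R) ∧
  (∀ i < Nat.factorial n, ∀ j < Nat.factorial n,
      partialProd n S i = partialProd n S j → i = j) ∧
  partialProd n S S.length = 1

/-- The value (0-indexed symbol) at the last position of the string `a`;
the one-line-notation symbol there is `lastVal a + 1`. -/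
def lastVal {n : ℕ} (a : Equiv.Perm (Fin n)) : ℕ :=
  if h : 0 < n then ((a ⟨n - 1, Nat.sub_lt h Nat.one_pos⟩ : Fin n) : ℕ) else 0

/-- Arc relation of the restricted incomplete rotator graph `RIR_n(R,m)`:
both endpoints have last symbol `≤ m` and `b = a·σ_r` for some `r ∈ R`. -/
def RIRAdj (n m : ℕ) (R : Set ℕ) (a b : Equiv.Perm (Fin n)) : Prop :=
  lastVal a < m ∧ lastVal b < m ∧ ∃ r ∈ R, b = a * sigmaRot n r

/-- `RIR_n(R,m)` is strongly connected. -/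
def StronglyConnectedRIR (n m : ℕ) (R : Set ℕ) : Prop :=
  ∀ a b : Equiv.Perm (Fin n), lastVal a < m → lastVal b < m →
    Relation.ReflTransGen (RIRAdj n m R) a b

/-- The reuse operation: replace each entry `r` by `n,…,n,n+1-r` (`n-1` copies of `n`). -/
def reuseOp (n : ℕ) (S : List ℕ) : List ℕ :=
  (S.map (fun r => List.replicate (n - 1) n ++ [n + 1 - r])).flatten

/-- Corbett's reuse sequences: `C₁ = (1)` and `C_k = reuse_k(C_{k-1})`. -/
def corbettC : ℕ → List ℕ
  | 0 => []
  | 1 => [1]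
  | k + 2 => reuseOp (k + 2) (corbettC (k + 1))

/-- The recycle operation: replace each entry `r` by
`n, n, n-1, …, n-1, n, …, n` (`r-1` copies of `n-1`, then `n-r-1` copies of `n`). -/
def recycleOp (n : ℕ) (S : List ℕ) : List ℕ :=
  (S.map (fun r => n :: n :: (List.replicate (r - 1) (n - 1) ++ List.replicate (n - r - 1) n))).flatten

/-- The canonical recycle sequences: `D₁ = (1)` and `D_k = recycle_k(D_{k-1})`. -/
def recycleD : ℕ → List ℕ
  | 0 => []
  | 1 => [1]
  | k + 2 => recycleOp (k + 2) (recycleD (k + 1))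

/-- The rewind operation `rewind_m(S)` (with `S = T, n-1, n-1`):
`(T,n-1,n)`, then `m-2` copies of `(T,n)`, then `(T,n-1,n)`, then `m-2` copies of `n`. -/
def rewindOp (n m : ℕ) (S : List ℕ) : List ℕ :=
  (S.dropLast.dropLast ++ [n - 1, n])
    ++ (List.replicate (m - 2) (S.dropLast.dropLast ++ [n])).flatten
    ++ (S.dropLast.dropLast ++ [n - 1, n])
    ++ List.replicate (m - 2) n

/-- The canonical rewind sequences: `W₂ = (2,2)` and `W_k = rewind_k(W_{k-1})`. -/
def rewindW : ℕ → List ℕ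
  | 0 => []
  | 1 => []
  | 2 => [2, 2]
  | k + 3 => rewindOp (k + 3) (k + 3) (rewindW (k + 2))

/-- `S` is a Hamilton sequence for the restricted incomplete rotator graph `RIR_n(R,m)`,
starting from the string `n n-1 ⋯ 1` (which is `Fin.revPerm`). -/
def IsHamiltonSeqRIR (n m : ℕ) (R : Set ℕ) (S : List ℕ) : Prop :=
  S.length = m * Nat.factorial (n - 1) ∧
  (∀ r ∈ S, r ∈ R) ∧
  (∀ i < S.length, ∀ j < S.length,
      Fin.revPerm * partialProd n S i = Fin.revPerm * partialProd n S j → i = j) ∧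
  {b : Equiv.Perm (Fin n) | ∃ i < S.length, b = Fin.revPerm * partialProd n S i}
    = {b : Equiv.Perm (Fin n) | lastVal b < m} ∧
  Fin.revPerm * partialProd n S S.length = Fin.revPerm

/-- The cyclic shift `shift²` moving the first two entries to the end. -/
def shift2 (S : List ℕ) : List ℕ := S.drop 2 ++ S.take 2

lemma sigmaRot_val (N r : ℕ) (hr1 : 1 ≤ r) (hrN : r ≤ N) (x : Fin N) :
    (sigmaRot N r x : ℕ) =
      if (x : ℕ) + 1 < r then (x : ℕ) + 1 else if (x : ℕ) + 1 = r then 0 else (x : ℕ) := by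
  obtain ⟨m, rfl⟩ : ∃ m, N = m + 1 := ⟨N - 1, by omega⟩
  have h : r - 1 < m + 1 := by omega
  simp only [sigmaRot, dif_pos h]
  rcases lt_trichotomy (x : ℕ) (r - 1) with hx | hx | hx
  · have hlt : x < (⟨r - 1, h⟩ : Fin (m + 1)) := hx
    rw [Fin.cycleRange_of_lt hlt]
    have hlast : x < Fin.last m := by
      rw [Fin.lt_def]; simp only [Fin.val_last]; omega
    rw [Fin.val_add_one_of_lt hlast]
    split_ifs <;> omega
  · have hx' : x = (⟨r - 1, h⟩ : Fin (m + 1)) := Fin.ext hx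
    rw [hx', Fin.cycleRange_self]
    simp only [Fin.val_zero, Fin.val_mk]
    split_ifs <;> omega
  · have hgt : (⟨r - 1, h⟩ : Fin (m + 1)) < x := hx
    rw [Fin.cycleRange_of_gt hgt]
    split_ifs <;> omega

lemma c_pow_val (n j : ℕ) (x : Fin (n + 1)) :
    (((sigmaRot (n + 1) (n + 1)) ^ j) x : ℕ) = ((x : ℕ) + j) % (n + 1) := by
  induction j generalizing x with
  | zero => simp [Nat.mod_eq_of_lt x.isLt]
  | succ j ih =>
    rw [pow_succ, Equiv.Perm.mul_apply, ih]
    have hc : ((sigmaRot (n + 1) (n + 1)) x : ℕ) = ((x : ℕ) + 1) % (n + 1) := by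
      rw [sigmaRot_val (n + 1) (n + 1) (by omega) le_rfl]
      have := x.isLt
      split_ifs with h1 h2
      · rw [Nat.mod_eq_of_lt (by omega)]
      · rw [h2, Nat.mod_self]
      · omega
    rw [hc, Nat.mod_add_mod]
    ring_nf

lemma mod_helper (a n : ℕ) (ha : a ≤ n) : (a + n) % (n + 1) = if a = 0 then n else a - 1 := by
  rcases Nat.eq_zero_or_pos a with rfl | hpos
  · simp [Nat.mod_eq_of_lt]
  · have h1 : a + n = (n + 1) + (a - 1) := by omega
    rw [h1, Nat.add_mod_left, Nat.mod_eq_of_lt (by omega)]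
    rw [if_neg (by omega)]

lemma sigmaRot_lower {n : ℕ} (r : ℕ) (h1 : 1 ≤ r) (h2 : r ≤ n) (x : Fin (n + 1)) :
    (sigmaRot (n + 1) r x : ℕ) =
      if h : (x : ℕ) < n then (sigmaRot n r ⟨(x : ℕ), h⟩ : ℕ) else (x : ℕ) := by
  rw [sigmaRot_val (n + 1) r h1 (by omega)]
  split_ifs with ha hb h hc hd
  · rw [sigmaRot_val n r h1 h2]; simp only [Fin.val_mk]; split_ifs <;> omega
  · have := x.isLt; omega
  · rw [sigmaRot_val n r h1 h2]; simp only [Fin.val_mk]; split_ifs <;> omega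
  · omega
  · rw [sigmaRot_val n r h1 h2]; simp only [Fin.val_mk]; split_ifs <;> omega
  · rfl

lemma agree {n : ℕ} (L : List ℕ) (hL : ∀ r ∈ L, 1 ≤ r ∧ r ≤ n) (x : Fin (n + 1)) :
    ((L.map (sigmaRot (n + 1))).prod x : ℕ) =
      if h : (x : ℕ) < n then ((L.map (sigmaRot n)).prod ⟨(x : ℕ), h⟩ : ℕ) else (x : ℕ) := by
  induction L generalizing x with
  | nil => simp
  | cons r L ih =>
    obtain ⟨hr1, hr2⟩ := hL r List.mem_cons_self
    have hL' : ∀ s ∈ L, 1 ≤ s ∧ s ≤ n := fun s hs => hL s (List.mem_cons_of_mem r hs)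
    simp only [List.map_cons, List.prod_cons, Equiv.Perm.mul_apply]
    set y := (L.map (sigmaRot (n + 1))).prod x with hy
    have hyv := ih hL' x
    rw [sigmaRot_lower r hr1 (by omega) y]
    by_cases hx : (x : ℕ) < n
    · rw [dif_pos hx] at hyv ⊢
      have hyn : (y : ℕ) < n := by rw [hyv]; exact ((L.map (sigmaRot n)).prod ⟨(x : ℕ), hx⟩).isLt
      rw [dif_pos hyn]
      have heq : (⟨(y : ℕ), hyn⟩ : Fin n) = (L.map (sigmaRot n)).prod ⟨(x : ℕ), hx⟩ :=
        Fin.ext hyv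
      rw [heq]
    · rw [dif_neg hx] at hyv ⊢
      rw [dif_neg (by omega : ¬ (y : ℕ) < n)]
      exact hyv

lemma rev_val {n : ℕ} (x : Fin (n + 1)) : ((Fin.revPerm x : Fin (n + 1)) : ℕ) = n - (x : ℕ) := by
  rw [Fin.revPerm_apply, Fin.val_rev]; omega

lemma revPerm_mul_self {n : ℕ} : (Fin.revPerm : Equiv.Perm (Fin (n + 1))) * Fin.revPerm = 1 := by
  ext x
  simp [Equiv.Perm.mul_apply, Fin.rev_rev]

lemma block {n : ℕ} (r : ℕ) (h2 : 2 ≤ r) (hn : r ≤ n) :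
    ((sigmaRot (n + 1) (n + 1)) ^ n) * sigmaRot (n + 1) (n + 2 - r) =
      Fin.revPerm * sigmaRot (n + 1) r * Fin.revPerm := by
  ext x
  simp only [Equiv.Perm.mul_apply]
  rw [c_pow_val]
  have h1 : ((sigmaRot (n + 1) (n + 2 - r)) x : ℕ) ≤ n := by
    have := ((sigmaRot (n + 1) (n + 2 - r)) x).isLt; omega
  rw [mod_helper _ n h1]
  rw [sigmaRot_val (n + 1) (n + 2 - r) (by omega) (by omega)]
  rw [rev_val]
  rw [sigmaRot_val (n + 1) r (by omega) (by omega)]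
  have hx := x.isLt
  have hrev : ((Fin.revPerm x : Fin (n + 1)) : ℕ) = n - (x : ℕ) := rev_val x
  rw [hrev]
  have hx2 : (x : ℕ) ≤ n := by omega
  clear hrev hx h1
  revert hx2
  generalize (x : ℕ) = s
  intro hx2
  split_ifs <;> (try contradiction) <;> omega
lemma reuseOp_cons (n r : ℕ) (L : List ℕ) :
    reuseOp n (r :: L) = (List.replicate (n - 1) n ++ [n + 1 - r]) ++ reuseOp n L := by
  simp [reuseOp]

lemma reuseOp_length (n : ℕ) (L : List ℕ) : (reuseOp (n + 1) L).length = L.length * (n + 1) := by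
  induction L with
  | nil => simp [reuseOp]
  | cons r L ih =>
    rw [reuseOp_cons, List.length_append, ih]
    simp only [List.length_append, List.length_replicate, List.length_cons, List.length_nil]
    ring_nf
    omega

lemma blockProd {n : ℕ} (L : List ℕ) (hL : ∀ r ∈ L, 2 ≤ r ∧ r ≤ n) :
    ((reuseOp (n + 1) L).map (sigmaRot (n + 1))).prod =
      Fin.revPerm * (L.map (sigmaRot (n + 1))).prod * Fin.revPerm := by
  induction L with
  | nil => simp [reuseOp, revPerm_mul_self]
  | cons r L ih =>
    obtain ⟨hr1, hr2⟩ := hL r List.mem_cons_self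
    rw [reuseOp_cons, List.map_append, List.prod_append, ih (fun s hs => hL s (List.mem_cons_of_mem r hs))]
    have hblock : (((List.replicate (n + 1 - 1) (n + 1) ++ [n + 1 + 1 - r]) : List ℕ).map
        (sigmaRot (n + 1))).prod = Fin.revPerm * sigmaRot (n + 1) r * Fin.revPerm := by
      rw [List.map_append, List.prod_append]
      simp only [List.map_replicate, List.prod_replicate, List.map_cons, List.map_nil,
        List.prod_cons, List.prod_nil, mul_one]
      have h1 : n + 1 - 1 = n := by omega
      have h2 : n + 1 + 1 - r = n + 2 - r := by omega
      rw [h1, h2, block r hr1 hr2]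
    rw [hblock]
    simp only [List.map_cons, List.prod_cons]
    simp only [← mul_assoc]
    rw [mul_assoc (Fin.revPerm * sigmaRot (n + 1) r) Fin.revPerm Fin.revPerm,
      revPerm_mul_self, mul_one]

lemma take_reuse {n : ℕ} (k : ℕ) : ∀ (L : List ℕ) (j : ℕ), j ≤ n → k ≤ L.length →
    (k < L.length ∨ j = 0) →
    (reuseOp (n + 1) L).take (k * (n + 1) + j) =
      reuseOp (n + 1) (L.take k) ++ List.replicate j (n + 1) := by
  induction k with
  | zero =>
    intro L j hj hk hor
    rcases L with _ | ⟨r, L⟩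
    · cases hor with
      | inl h => exact absurd h (by simp)
      | inr h => simp [h, reuseOp]
    · rw [reuseOp_cons]
      simp only [zero_mul, zero_add, List.take_zero, reuseOp]
      simp only [List.map_nil, List.flatten_nil, List.nil_append]
      rw [List.take_append_of_le_length (by simp; omega),
        List.take_append_of_le_length (by simp; omega), List.take_replicate]
      congr 1
      omega
  | succ k ih =>
    intro L j hj hk hor
    rcases L with _ | ⟨r, L⟩
    · simp at hk
    · rw [reuseOp_cons]
      have hlen : ((List.replicate (n + 1 - 1) (n + 1) ++ [n + 1 + 1 - r]) : List ℕ).length = n + 1 := by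
        simp
      have harith : (k + 1) * (n + 1) + j =
          ((List.replicate (n + 1 - 1) (n + 1) ++ [n + 1 + 1 - r]) : List ℕ).length + (k * (n + 1) + j) := by
        rw [hlen]; ring
      rw [harith, List.take_append, Nat.add_sub_cancel_left, List.take_of_length_le (by omega)]
      have hk' : k ≤ L.length := by simpa using hk
      have hor' : k < L.length ∨ j = 0 := by
        rcases hor with h | h
        · simp at h; omega
        · right; exact h
      rw [ih L j hj hk' hor']
      rw [List.take_succ_cons, reuseOp_cons]
      exact (List.append_assoc _ _ _).symm
lemma partial_formula {n : ℕ} (S : List ℕ) (hS : ∀ r ∈ S, 2 ≤ r ∧ r ≤ n) (k j : ℕ)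
    (hj : j ≤ n) (hk : k ≤ S.length) (hor : k < S.length ∨ j = 0) :
    partialProd (n + 1) (reuseOp (n + 1) S) (k * (n + 1) + j) =
      Fin.revPerm * partialProd (n + 1) S k * Fin.revPerm * (sigmaRot (n + 1) (n + 1)) ^ j := by
  unfold partialProd
  rw [take_reuse k S j hj hk hor, List.map_append, List.prod_append,
    blockProd _ (fun r hr => hS r (List.take_subset k S hr))]
  simp [List.map_replicate, List.prod_replicate]

lemma mod_zero1 (n j : ℕ) (hj : j ≤ n) : ((n + 1 - j) % (n + 1) + j) % (n + 1) = 0 := by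
  rcases Nat.eq_zero_or_pos j with rfl | hpos
  · rw [Nat.sub_zero, Nat.mod_self]; simp
  · have h1 : (n + 1 - j) % (n + 1) = n + 1 - j := Nat.mod_eq_of_lt (by omega)
    rw [h1, show n + 1 - j + j = n + 1 by omega, Nat.mod_self]

lemma mod_zero2 (n j j' : ℕ) (hj : j ≤ n) (hj' : j' ≤ n)
    (h : ((n + 1 - j) % (n + 1) + j') % (n + 1) = 0) : j' = j := by
  rcases Nat.eq_zero_or_pos j with rfl | hpos
  · rw [Nat.sub_zero, Nat.mod_self, Nat.zero_add, Nat.mod_eq_of_lt (by omega)] at h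
    omega
  · have h1 : (n + 1 - j) % (n + 1) = n + 1 - j := Nat.mod_eq_of_lt (by omega)
    rw [h1] at h
    rcases Nat.lt_or_ge (n + 1 - j + j') (n + 1) with hlt | hge
    · rw [Nat.mod_eq_of_lt hlt] at h; omega
    · have heq : n + 1 - j + j' = (n + 1) + (n + 1 - j + j' - (n + 1)) := by omega
      rw [heq, Nat.add_mod_left, Nat.mod_eq_of_lt (by omega)] at h
      omega

lemma conj_fix_zero {n : ℕ} (P : Equiv.Perm (Fin (n + 1)))
    (hP : P ⟨n, lt_add_one n⟩ = ⟨n, lt_add_one n⟩) :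
    Fin.revPerm (P (Fin.revPerm (0 : Fin (n + 1)))) = 0 := by
  have h0 : (Fin.revPerm (0 : Fin (n + 1))) = ⟨n, lt_add_one n⟩ := by
    apply Fin.ext; rw [rev_val]; simp
  rw [h0, hP]
  apply Fin.ext
  rw [rev_val]
  simp

lemma prod_fix_last {n : ℕ} (L : List ℕ) (hL : ∀ r ∈ L, 1 ≤ r ∧ r ≤ n) :
    (L.map (sigmaRot (n + 1))).prod ⟨n, lt_add_one n⟩ = ⟨n, lt_add_one n⟩ := by
  have h := agree L hL ⟨n, lt_add_one n⟩
  rw [dif_neg (by simp)] at h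
  exact Fin.ext h

theorem step (n : ℕ) (hn2 : 2 ≤ n) (S : List ℕ)
    (IH : IsHamiltonSeq n {r | 2 ≤ r ∧ r ≤ n} S) :
    IsHamiltonSeq (n + 1) {r | 2 ≤ r ∧ r ≤ n + 1} (reuseOp (n + 1) S) := by
  obtain ⟨hlen, hmem, hinj, htot⟩ := IH
  have hS : ∀ r ∈ S, 2 ≤ r ∧ r ≤ n := fun r hr => hmem r hr
  have hS1 : ∀ r ∈ S, 1 ≤ r ∧ r ≤ n := fun r hr => ⟨by have := (hS r hr).1; omega, (hS r hr).2⟩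
  have Tdet : ∀ k k' : ℕ, partialProd n S k = partialProd n S k' →
      partialProd (n + 1) S k = partialProd (n + 1) S k' := by
    intro k k' h
    ext x
    have h1 := agree (S.take k) (fun r hr => hS1 r (List.take_subset k S hr)) x
    have h2 := agree (S.take k') (fun r hr => hS1 r (List.take_subset k' S hr)) x
    show ((partialProd (n + 1) S k) x : ℕ) = ((partialProd (n + 1) S k') x : ℕ)
    simp only [partialProd] at h ⊢
    rw [h1, h2]
    by_cases hx : (x : ℕ) < n
    · rw [dif_pos hx, dif_pos hx, h]
    · rw [dif_neg hx, dif_neg hx]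
  have Tdet' : ∀ k k' : ℕ, partialProd (n + 1) S k = partialProd (n + 1) S k' →
      partialProd n S k = partialProd n S k' := by
    intro k k' h
    ext x
    have hxlt : (x : ℕ) < n := x.isLt
    have h1 := agree (S.take k) (fun r hr => hS1 r (List.take_subset k S hr)) ⟨(x : ℕ), by omega⟩
    have h2 := agree (S.take k') (fun r hr => hS1 r (List.take_subset k' S hr)) ⟨(x : ℕ), by omega⟩
    simp only [Fin.val_mk] at h1 h2
    simp only [dif_pos hxlt] at h1 h2
    simp only [Fin.eta] at h1 h2
    show ((partialProd n S k) x : ℕ) = ((partialProd n S k') x : ℕ)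
    simp only [partialProd] at h ⊢
    rw [← h1, ← h2, h]
  have Tfix : ∀ k : ℕ, partialProd (n + 1) S k ⟨n, lt_add_one n⟩ = ⟨n, lt_add_one n⟩ :=
    fun k => prod_fix_last (S.take k) (fun r hr => hS1 r (List.take_subset k S hr))
  refine ⟨?_, ?_, ?_, ?_⟩
  · rw [reuseOp_length, hlen, Nat.factorial_succ, Nat.mul_comm]
  · intro r hr
    simp only [reuseOp, List.mem_flatten, List.mem_map] at hr
    obtain ⟨l, ⟨r', hr'S, rfl⟩, hrl⟩ := hr
    rcases List.mem_append.mp hrl with h | h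
    · have := List.eq_of_mem_replicate h
      constructor <;> omega
    · simp at h
      have := hS r' hr'S
      constructor <;> omega
  · intro i hi i' hi' heq
    obtain ⟨k, j, hij, hjn, hkf⟩ :
        ∃ k j, i = k * (n + 1) + j ∧ j ≤ n ∧ k < Nat.factorial n := by
      refine ⟨i / (n + 1), i % (n + 1), ?_, ?_, ?_⟩
      · rw [Nat.mul_comm]; exact (Nat.div_add_mod i (n + 1)).symm
      · have := Nat.mod_lt i (y := n + 1) (by omega); omega
      · rw [Nat.div_lt_iff_lt_mul (by omega)]
        rw [Nat.factorial_succ, Nat.mul_comm] at hi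
        exact hi
    obtain ⟨k', j', hij', hjn', hkf'⟩ :
        ∃ k' j', i' = k' * (n + 1) + j' ∧ j' ≤ n ∧ k' < Nat.factorial n := by
      refine ⟨i' / (n + 1), i' % (n + 1), ?_, ?_, ?_⟩
      · rw [Nat.mul_comm]; exact (Nat.div_add_mod i' (n + 1)).symm
      · have := Nat.mod_lt i' (y := n + 1) (by omega); omega
      · rw [Nat.div_lt_iff_lt_mul (by omega)]
        rw [Nat.factorial_succ, Nat.mul_comm] at hi'
        exact hi'
    subst hij
    subst hij'
    rw [partial_formula S hS k j hjn (by omega) (by left; omega),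
        partial_formula S hS k' j' hjn' (by omega) (by left; omega)] at heq
    set x₀ : Fin (n + 1) := ⟨(n + 1 - j) % (n + 1), Nat.mod_lt _ (by omega)⟩ with hx₀
    have happ := congrArg (fun p : Equiv.Perm (Fin (n + 1)) => p x₀) heq
    simp only [Equiv.Perm.mul_apply] at happ
    have hc : ((sigmaRot (n + 1) (n + 1)) ^ j) x₀ = 0 := by
      apply Fin.ext
      rw [c_pow_val, hx₀]
      simpa using mod_zero1 n j hjn
    have hL0 : Fin.revPerm ((partialProd (n + 1) S k)
        (Fin.revPerm (((sigmaRot (n + 1) (n + 1)) ^ j) x₀))) = 0 := by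
      rw [hc]; exact conj_fix_zero _ (Tfix k)
    have hR0 : Fin.revPerm ((partialProd (n + 1) S k')
        (Fin.revPerm (((sigmaRot (n + 1) (n + 1)) ^ j') x₀))) = 0 := by
      rw [← happ]; exact hL0
    have h00 : Fin.revPerm ((partialProd (n + 1) S k')
        (Fin.revPerm (0 : Fin (n + 1)))) = 0 := conj_fix_zero _ (Tfix k')
    have e1 := (Fin.revPerm (n := n + 1)).injective (hR0.trans h00.symm)
    have e2 := (partialProd (n + 1) S k').injective e1
    have hc' := (Fin.revPerm (n := n + 1)).injective e2
    have hjj : j' = j := by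
      apply mod_zero2 n j j' hjn hjn'
      have hval := congrArg Fin.val hc'
      rw [c_pow_val, hx₀] at hval
      simpa using hval
    subst hjj
    have hTT : partialProd (n + 1) S k = partialProd (n + 1) S k' := by
      have h1 := mul_right_cancel heq
      have h2 := mul_right_cancel h1
      exact mul_left_cancel h2
    have hkk := hinj k hkf k' hkf' (Tdet' k k' hTT)
    rw [hkk]
  · rw [reuseOp_length]
    have hT1 : partialProd (n + 1) S S.length = 1 := by
      have hQ : partialProd n S S.length = partialProd n S 0 := by
        rw [htot]; simp [partialProd]
      have h := Tdet S.length 0 hQ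
      rw [h]; simp [partialProd]
    rw [show S.length * (n + 1) = S.length * (n + 1) + 0 from rfl,
      partial_formula S hS S.length 0 (by omega) le_rfl (Or.inr rfl)]
    rw [hT1, pow_zero, mul_one, mul_one, revPerm_mul_self]
theorem base2 : IsHamiltonSeq 2 {r | 2 ≤ r ∧ r ≤ 2} (corbettC 2) := by
  have hc : corbettC 2 = [2, 2] := by decide
  rw [hc]
  refine ⟨by decide, by decide, ?_, by decide⟩
  decide

/-- Corbett. For every `n ≥ 2`, the reuse sequence `C_n` is a Hamilton
sequence for the rotator graph `PR_n = RR_n({2,…,n})`. -/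
theorem stmt4 (n : ℕ) (hn : 2 ≤ n) :
    IsHamiltonSeq n {r | 2 ≤ r ∧ r ≤ n} (corbettC n) := by
  induction n, hn using Nat.le_induction with
  | base => exact base2
  | succ n hn ih =>
    have hC : corbettC (n + 1) = reuseOp (n + 1) (corbettC n) := by
      obtain ⟨m, rfl⟩ : ∃ m, n = m + 1 := ⟨n - 1, by omega⟩
      rfl
    rw [hC]
    exact step n hn (corbettC n) ih
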